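/- Let D = (n, ι, P) be a finite Markov chain with target set T ⊆ Fin n, and let Z := { s : Pr_{D,s}(◇T) = 0 }. Then the function p(s) := Pr_{D,s}(◇T) is the unique function p : Fin n → ℝ satisfying: p s = 1 for all s ∈ T; p s = 0 for all s ∈ Z; and p s = ∑_{s'} P s s' · p s' for all s ∉ T ∪ Z. -/

import Mathlib

/-- A finite path in state space `S`: a length `m` together with `m + 1` states. -/
abbrev MCPath (S : Type) : Type := Σ m : ℕ, Fin (m + 1) → S

/-- The mass of a path: the product of the transition probabilities along it. -/
def pathMass {S : Type} (P : S → S → ℝ) (π : MCPath S) : ℝ :=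
  ∏ i : Fin π.1, P (π.2 i.castSucc) (π.2 i.succ)

/-- A hitting path from `s` to `T`: it starts in `s`, ends in `T`, and no proper prefix
visits `T`. -/
def IsHitting {S : Type} (T : Set S) (s : S) (π : MCPath S) : Prop :=
  π.2 0 = s ∧ π.2 (Fin.last π.1) ∈ T ∧ ∀ i : Fin π.1, π.2 i.castSucc ∉ T

/-- The reachability probability `Pr_{P,s}(◇T)`: the sum of the masses of all hitting
paths from `s` to `T`. -/
noncomputable def reachProb {S : Type} (P : S → S → ℝ) (T : Set S) (s : S) : ℝ :=
  ∑' π : {π : MCPath S // IsHitting T s π}, pathMass P π.1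

open scoped ENNReal

namespace ReachAux

variable {S : Type}

/-- ENNReal-valued path mass. -/
noncomputable def mE (P : S → S → ℝ) (π : MCPath S) : ℝ≥0∞ :=
  ∏ i : Fin π.1, ENNReal.ofReal (P (π.2 i.castSucc) (π.2 i.succ))

lemma mE_ne_top (P : S → S → ℝ) (π : MCPath S) : mE P π ≠ ∞ :=
  (ENNReal.prod_lt_top fun _ _ => ENNReal.ofReal_lt_top).ne

lemma mE_toReal {P : S → S → ℝ} (hpos : ∀ s s', 0 ≤ P s s') (π : MCPath S) :
    (mE P π).toReal = pathMass P π := by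
  rw [mE, ENNReal.toReal_prod]
  exact Finset.prod_congr rfl fun i _ => ENNReal.toReal_ofReal (hpos _ _)

/-- ENNReal-valued reachability probability. -/
noncomputable def reachE (P : S → S → ℝ) (T : Set S) (s : S) : ℝ≥0∞ :=
  ∑' π : {π : MCPath S // IsHitting T s π}, mE P π.1

/-- The trivial path. -/
def trivP (s : S) : MCPath S := ⟨0, fun _ => s⟩

lemma mE_trivP (P : S → S → ℝ) (s : S) : mE P (trivP s) = 1 := by
  exact Fin.prod_univ_zero _

lemma isHitting_trivP {T : Set S} {s : S} (hs : s ∈ T) : IsHitting T s (trivP s) :=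
  ⟨rfl, hs, fun i => i.elim0⟩

lemma eq_trivP {T : Set S} {s : S} (hs : s ∈ T) {π : MCPath S} (hπ : IsHitting T s π) :
    π = trivP s := by
  obtain ⟨m, f⟩ := π
  obtain ⟨h1, h2, h3⟩ := hπ
  cases m with
  | zero =>
    have hf : f = fun _ => s := by
      funext i
      have : i = 0 := Fin.ext (by omega)
      rw [this]; exact h1
    show (⟨0, f⟩ : MCPath S) = trivP s
    rw [hf]; rfl
  | succ m =>
    have h0 : f (Fin.castSucc 0) ∉ T := h3 0
    rw [Fin.castSucc_zero] at h0
    have h1' : f 0 = s := h1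
    exact absurd (show f 0 ∈ T by rw [h1']; exact hs) h0

/-- Prepend a state. -/
def consP (s : S) (π : MCPath S) : MCPath S := ⟨π.1 + 1, Fin.cons s π.2⟩

lemma mE_consP (P : S → S → ℝ) (s : S) (π : MCPath S) :
    mE P (consP s π) = ENNReal.ofReal (P s (π.2 0)) * mE P π := by
  obtain ⟨m, f⟩ := π
  have : mE P (consP s ⟨m, f⟩) = ∏ i : Fin (m + 1), ENNReal.ofReal
      (P ((Fin.cons s f : Fin (m + 2) → S) i.castSucc)
        ((Fin.cons s f : Fin (m + 2) → S) i.succ)) := rfl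
  rw [this, Fin.prod_univ_succ]
  refine congrArg₂ (· * ·) (by simp) (Finset.prod_congr rfl fun i _ => ?_)
  have e1 : (i.succ).castSucc = (i.castSucc).succ := by
    apply Fin.ext; simp
  rw [e1, Fin.cons_succ, Fin.cons_succ]

lemma isHitting_consP {T : Set S} {s s' : S} (hs : s ∉ T) {π : MCPath S}
    (hπ : IsHitting T s' π) : IsHitting T s (consP s π) := by
  obtain ⟨m, f⟩ := π
  obtain ⟨h1, h2, h3⟩ := hπ
  refine ⟨by simp [consP]; exact Fin.cons_zero _ _, ?_, ?_⟩
  · show (Fin.cons s f : Fin (m + 2) → S) (Fin.last (m + 1)) ∈ T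
    rw [← Fin.succ_last, Fin.cons_succ]; exact h2
  · intro i
    induction i using Fin.cases with
    | zero =>
      show (Fin.cons s f : Fin (m + 2) → S) (Fin.castSucc 0) ∉ T
      rw [Fin.castSucc_zero, Fin.cons_zero]; exact hs
    | succ j =>
      show (Fin.cons s f : Fin (m + 2) → S) ((j.succ).castSucc) ∉ T
      have e1 : (j.succ).castSucc = (j.castSucc).succ := by apply Fin.ext; simp
      rw [e1, Fin.cons_succ]; exact h3 j

/-- Tail of a path (junk on length-0 paths). -/
def tailP : MCPath S → MCPath S
  | ⟨0, f⟩ => ⟨0, f⟩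
  | ⟨m + 1, f⟩ => ⟨m, Fin.tail f⟩

lemma isHitting_tailP {T : Set S} {s : S} (hs : s ∉ T) {π : MCPath S}
    (hπ : IsHitting T s π) : IsHitting T ((tailP π).2 0) (tailP π) := by
  obtain ⟨m, f⟩ := π
  obtain ⟨h1, h2, h3⟩ := hπ
  cases m with
  | zero => exact absurd (show s ∈ T by rw [← h1]; simpa using h2) hs
  | succ m =>
    refine ⟨rfl, ?_, ?_⟩
    · show f (Fin.last m).succ ∈ T
      rw [Fin.succ_last]; exact h2
    · intro i
      show f (i.castSucc).succ ∉ T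
      have e1 : (i.castSucc).succ = (i.succ).castSucc := by apply Fin.ext; simp
      rw [e1]; exact h3 i.succ

/-- Decomposition of hitting paths from `s ∉ T` into first step and tail. -/
noncomputable def hitEquiv (P : S → S → ℝ) (T : Set S) (s : S) (hs : s ∉ T) :
    (Σ s' : S, {π : MCPath S // IsHitting T s' π}) ≃ {π : MCPath S // IsHitting T s π} where
  toFun x := ⟨consP s x.2.1, isHitting_consP hs x.2.2⟩
  invFun π := ⟨(tailP π.1).2 0, tailP π.1, isHitting_tailP hs π.2⟩
  left_inv := by
    rintro ⟨s', ⟨⟨m, g⟩, hg⟩⟩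
    obtain rfl : g 0 = s' := hg.1
    have ht : tailP (consP s ⟨m, g⟩) = ⟨m, g⟩ := by
      show (⟨m, Fin.tail (Fin.cons s g : Fin (m + 2) → S)⟩ : MCPath S) = ⟨m, g⟩
      rw [Fin.tail_cons]
    refine Sigma.ext ?_ ?_
    · show (tailP (consP s ⟨m, g⟩)).2 0 = g 0
      rw [ht]
    · refine (Subtype.heq_iff_coe_eq ?_).mpr ht
      intro x
      show IsHitting T ((tailP (consP s ⟨m, g⟩)).2 0) x ↔ IsHitting T (g 0) x
      rw [ht]
  right_inv := by
    rintro ⟨⟨m, f⟩, hf⟩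
    cases m with
    | zero =>
      exact absurd (show s ∈ T by rw [← hf.1]; simpa using hf.2.1) hs
    | succ m =>
      apply Subtype.ext
      show (⟨m + 1, (Fin.cons s (Fin.tail f) : Fin (m + 2) → S)⟩ : MCPath S) = ⟨m + 1, f⟩
      have : Fin.cons s (Fin.tail f) = f := by
        have h0 : f 0 = s := hf.1
        rw [← h0]; exact Fin.cons_self_tail f
      rw [this]

lemma reachE_eq_one {P : S → S → ℝ} {T : Set S} {s : S} (hs : s ∈ T) :
    reachE P T s = 1 := by
  rw [reachE, tsum_eq_single (⟨trivP s, isHitting_trivP hs⟩ :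
      {π : MCPath S // IsHitting T s π})]
  · exact mE_trivP P s
  · intro b hb
    exact absurd (Subtype.ext (eq_trivP hs b.2)) hb

lemma reachE_rec {P : S → S → ℝ} {T : Set S} {s : S} (hs : s ∉ T) :
    reachE P T s = ∑' s' : S, ENNReal.ofReal (P s s') * reachE P T s' := by
  calc reachE P T s
      = ∑' x : Σ s' : S, {π : MCPath S // IsHitting T s' π},
          mE P (consP s x.2.1) := ((hitEquiv P T s hs).tsum_eq _).symm
    _ = ∑' s' : S, ∑' π : {π : MCPath S // IsHitting T s' π},
          mE P (consP s π.1) := ENNReal.tsum_sigma' _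
    _ = ∑' s' : S, ∑' π : {π : MCPath S // IsHitting T s' π},
          ENNReal.ofReal (P s s') * mE P π.1 := by
        refine tsum_congr fun s' => tsum_congr fun π => ?_
        rw [mE_consP, π.2.1]
    _ = ∑' s' : S, ENNReal.ofReal (P s s') * reachE P T s' := by
        exact tsum_congr fun s' => ENNReal.tsum_mul_left

/-- Length-truncated reachability. -/
noncomputable def reachTr (P : S → S → ℝ) (T : Set S) (k : ℕ) (s : S) : ℝ≥0∞ :=
  ∑' π : {π : MCPath S // IsHitting T s π}, if π.1.1 ≤ k then mE P π.1 else 0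

lemma length_ne_zero {T : Set S} {s : S} (hs : s ∉ T) {π : MCPath S}
    (hπ : IsHitting T s π) : π.1 ≠ 0 := by
  obtain ⟨m, f⟩ := π
  cases m with
  | zero => exact absurd (hπ.1 ▸ hs) (fun h => h hπ.2.1)
  | succ m => simp

lemma reachTr_in_target {P : S → S → ℝ} {T : Set S} {s : S} (hs : s ∈ T) (k : ℕ) :
    reachTr P T k s = 1 := by
  rw [reachTr, tsum_eq_single (⟨trivP s, isHitting_trivP hs⟩ :
      {π : MCPath S // IsHitting T s π})]
  · show (if (trivP s : MCPath S).1 ≤ k then mE P (trivP s) else 0) = 1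
    have hle : (trivP s : MCPath S).1 ≤ k := Nat.zero_le k
    rw [if_pos hle, mE_trivP]
  · intro b hb
    exact absurd (Subtype.ext (eq_trivP hs b.2)) hb

lemma reachTr_rec {P : S → S → ℝ} {T : Set S} {s : S} (hs : s ∉ T) (k : ℕ) :
    reachTr P T (k + 1) s = ∑' s' : S, ENNReal.ofReal (P s s') * reachTr P T k s' := by
  calc reachTr P T (k + 1) s
      = ∑' x : Σ s' : S, {π : MCPath S // IsHitting T s' π},
          (if (consP s x.2.1).1 ≤ k + 1 then mE P (consP s x.2.1) else 0) :=
        ((hitEquiv P T s hs).tsum_eq _).symm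
    _ = ∑' s' : S, ∑' π : {π : MCPath S // IsHitting T s' π},
          (if (consP s π.1).1 ≤ k + 1 then mE P (consP s π.1) else 0) :=
        ENNReal.tsum_sigma' _
    _ = ∑' s' : S, ∑' π : {π : MCPath S // IsHitting T s' π},
          ENNReal.ofReal (P s s') * (if π.1.1 ≤ k then mE P π.1 else 0) := by
        refine tsum_congr fun s' => tsum_congr fun π => ?_
        have hc : (consP s π.1).1 = π.1.1 + 1 := rfl
        rw [hc]
        by_cases h : π.1.1 ≤ k
        · rw [if_pos (by omega), if_pos h, mE_consP, π.2.1]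
        · rw [if_neg (by omega), if_neg h, mul_zero]
    _ = ∑' s' : S, ENNReal.ofReal (P s s') * reachTr P T k s' :=
        tsum_congr fun s' => ENNReal.tsum_mul_left

lemma reachTr_le_one [Fintype S] {P : S → S → ℝ} {T : Set S}
    (hpos : ∀ s s', 0 ≤ P s s') (hrow : ∀ s, ∑ s', P s s' = 1) :
    ∀ k (s : S), reachTr P T k s ≤ 1 := by
  intro k
  induction k with
  | zero =>
    intro s
    by_cases hs : s ∈ T
    · exact (reachTr_in_target hs 0).le
    · have : reachTr P T 0 s = 0 := by
        rw [reachTr]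
        convert tsum_zero with π
        rw [if_neg]
        simpa using length_ne_zero hs π.2
      rw [this]; exact zero_le_one
  | succ k IH =>
    intro s
    by_cases hs : s ∈ T
    · exact (reachTr_in_target hs (k + 1)).le
    · rw [reachTr_rec hs k]
      calc (∑' s' : S, ENNReal.ofReal (P s s') * reachTr P T k s')
          ≤ ∑' s' : S, ENNReal.ofReal (P s s') * 1 :=
            ENNReal.tsum_le_tsum fun s' => mul_le_mul_right (IH s') _
        _ = ∑ s' : S, ENNReal.ofReal (P s s') := by
            rw [tsum_fintype]; simp
        _ = ENNReal.ofReal (∑ s' : S, P s s') :=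
            (ENNReal.ofReal_sum_of_nonneg fun i _ => hpos s i).symm
        _ = 1 := by rw [hrow s, ENNReal.ofReal_one]

lemma reachE_le_one [Fintype S] {P : S → S → ℝ} {T : Set S}
    (hpos : ∀ s s', 0 ≤ P s s') (hrow : ∀ s, ∑ s', P s s' = 1) (s : S) :
    reachE P T s ≤ 1 := by
  rw [reachE, ENNReal.tsum_eq_iSup_sum]
  refine iSup_le fun F => ?_
  have h1 : (∑ π ∈ F, mE P π.1) =
      ∑ π ∈ F, (if π.1.1 ≤ F.sup (fun π => π.1.1) then mE P π.1 else 0) :=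
    Finset.sum_congr rfl fun π hπ =>
      (if_pos (Finset.le_sup (f := fun π : {π : MCPath S // IsHitting T s π} => π.1.1)
        hπ)).symm
  rw [h1]
  have h2 : (∑' π : {π : MCPath S // IsHitting T s π},
      if π.1.1 ≤ F.sup (fun π => π.1.1) then mE P π.1 else 0) =
      reachTr P T (F.sup (fun π => π.1.1)) s := rfl
  exact le_trans (le_trans (ENNReal.sum_le_tsum F) h2.le)
    (reachTr_le_one hpos hrow _ s)

lemma reachE_ne_top [Fintype S] {P : S → S → ℝ} {T : Set S}
    (hpos : ∀ s s', 0 ≤ P s s') (hrow : ∀ s, ∑ s', P s s' = 1) (s : S) :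
    reachE P T s ≠ ∞ :=
  (lt_of_le_of_lt (reachE_le_one hpos hrow s) ENNReal.one_lt_top).ne

lemma reachProb_eq_toReal {P : S → S → ℝ} {T : Set S}
    (hpos : ∀ s s', 0 ≤ P s s') (s : S) :
    reachProb P T s = (reachE P T s).toReal := by
  rw [reachProb, reachE,
    ENNReal.tsum_toReal_eq (f := fun π : {π : MCPath S // IsHitting T s π} => mE P π.1)
      (fun π => mE_ne_top P π.1)]
  exact tsum_congr fun π => (mE_toReal hpos π.1).symm

lemma reachProb_one {P : S → S → ℝ} {T : Set S}
    (hpos : ∀ s s', 0 ≤ P s s') {s : S} (hs : s ∈ T) :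
    reachProb P T s = 1 := by
  rw [reachProb_eq_toReal hpos, reachE_eq_one hs, ENNReal.toReal_one]

lemma reachProb_rec [Fintype S] {P : S → S → ℝ} {T : Set S}
    (hpos : ∀ s s', 0 ≤ P s s') (hrow : ∀ s, ∑ s', P s s' = 1) {s : S} (hs : s ∉ T) :
    reachProb P T s = ∑ s' : S, P s s' * reachProb P T s' := by
  rw [reachProb_eq_toReal hpos, reachE_rec hs, tsum_fintype, ENNReal.toReal_sum
    (fun s' _ => ENNReal.mul_ne_top ENNReal.ofReal_ne_top (reachE_ne_top hpos hrow s'))]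
  refine Finset.sum_congr rfl fun s' _ => ?_
  rw [ENNReal.toReal_mul, ENNReal.toReal_ofReal (hpos s s'), reachProb_eq_toReal hpos]

lemma pathMass_nonneg {P : S → S → ℝ} (hpos : ∀ s s', 0 ≤ P s s') (π : MCPath S) :
    0 ≤ pathMass P π :=
  Finset.prod_nonneg fun i _ => hpos _ _

lemma exists_pos_path {P : S → S → ℝ} {T : Set S} {s : S}
    (hpos : ∀ s s', 0 ≤ P s s') (hs : reachProb P T s ≠ 0) :
    ∃ π : MCPath S, IsHitting T s π ∧ 0 < pathMass P π := by
  by_contra h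
  push_neg at h
  apply hs
  rw [reachProb]
  convert tsum_zero with π
  exact le_antisymm (h π.1 π.2) (pathMass_nonneg hpos π.1)

end ReachAux

/-- Bellman characterization: for a finite Markov chain `(n, ι, P)` with target set `T`,
letting `Z = {s | Pr_{P,s}(◇T) = 0}`, the function `s ↦ Pr_{P,s}(◇T)` is the unique function
`p : Fin n → ℝ` with `p s = 1` on `T`, `p s = 0` on `Z`, and
`p s = ∑ s', P s s' * p s'` for `s ∉ T ∪ Z`. -/
theorem reachProb_unique_bellman {n : ℕ} (ι : Fin n) (P : Fin n → Fin n → ℝ)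
    (hpos : ∀ s s', 0 ≤ P s s') (hrow : ∀ s, ∑ s', P s s' = 1)
    (T : Set (Fin n)) (p : Fin n → ℝ) :
    ((∀ s ∈ T, p s = 1) ∧
     (∀ s ∈ {s | reachProb P T s = 0}, p s = 0) ∧
     (∀ s, s ∉ T ∪ {s | reachProb P T s = 0} → p s = ∑ s', P s s' * p s'))
    ↔ p = fun s => reachProb P T s := by
  open ReachAux in
  constructor
  · rintro ⟨hp1, hp2, hp3⟩
    set q : Fin n → ℝ := fun s => p s - reachProb P T s with hqdef
    have qT : ∀ s ∈ T, q s = 0 := fun s hs => by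
      simp only [hqdef, hp1 s hs, reachProb_one hpos hs, sub_self]
    have qZ : ∀ s, reachProb P T s = 0 → q s = 0 := fun s hs => by
      simp only [hqdef, hp2 s hs, hs, sub_self]
    have qRec : ∀ s, s ∉ T → reachProb P T s ≠ 0 → q s = ∑ s', P s s' * q s' := by
      intro s hsT hsZ
      have h1 : p s = ∑ s', P s s' * p s' :=
        hp3 s (by simp [hsT, hsZ])
      have h2 : reachProb P T s = ∑ s', P s s' * reachProb P T s' :=
        reachProb_rec hpos hrow hsT
      simp only [hqdef, h1, h2, ← Finset.sum_sub_distrib, mul_sub]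
    suffices hq0 : ∀ s, q s = 0 by
      funext s
      have := hq0 s
      simp only [hqdef] at this
      linarith
    rcases Nat.eq_zero_or_pos n with h0 | hn
    · subst h0; exact fun s => s.elim0
    · haveI : Nonempty (Fin n) := Fin.pos_iff_nonempty.mp hn
      obtain ⟨s0, -, hmax⟩ := Finset.exists_max_image Finset.univ (fun s => |q s|)
        ⟨Classical.arbitrary _, Finset.mem_univ _⟩
      set M : ℝ := |q s0| with hMdef
      have hmax' : ∀ s, |q s| ≤ M := fun s => hmax s (Finset.mem_univ s)
      have hM0 : M = 0 := by
        by_contra hM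
        have hMpos : 0 < M := lt_of_le_of_ne (abs_nonneg _) (Ne.symm hM)
        have habsM : ∀ s, |q s| = M → (s ∉ T ∧ reachProb P T s ≠ 0) := by
          intro s hsM
          constructor
          · intro h; rw [qT s h, abs_zero] at hsM; exact hM hsM.symm
          · intro h; rw [qZ s h, abs_zero] at hsM; exact hM hsM.symm
        obtain ⟨hs0T, hs0Z⟩ := habsM s0 rfl
        obtain ⟨π, hπ, hmass⟩ := exists_pos_path hpos hs0Z
        have hstep : ∀ i : Fin π.1, 0 < P (π.2 i.castSucc) (π.2 i.succ) := by
          intro i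
          rcases lt_or_eq_of_le (hpos (π.2 i.castSucc) (π.2 i.succ)) with h | h
          · exact h
          · exfalso
            have : pathMass P π = 0 :=
              Finset.prod_eq_zero (Finset.mem_univ i) h.symm
            rw [this] at hmass; exact lt_irrefl 0 hmass
        have key : ∀ k (hk : k ≤ π.1), |q (π.2 ⟨k, Nat.lt_succ_of_le hk⟩)| = M := by
          intro k
          induction k with
          | zero =>
            intro _
            have h0 : π.2 ⟨0, Nat.lt_succ_of_le (Nat.zero_le _)⟩ = s0 := hπ.1
            rw [h0]
          | succ k IH =>
            intro hk1
            have hk : k ≤ π.1 := Nat.le_of_succ_le hk1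
            have hklt : k < π.1 := hk1
            set i : Fin π.1 := ⟨k, hklt⟩ with hidef
            have hcast : i.castSucc = ⟨k, Nat.lt_succ_of_le hk⟩ := by
              apply Fin.ext; simp [hidef]
            set sk : Fin n := π.2 i.castSucc with hskdef
            have hIH : |q sk| = M := by rw [hskdef, hcast]; exact IH hk
            obtain ⟨hskT, hskZ⟩ := habsM sk hIH
            have heq := qRec sk hskT hskZ
            have h1 : M ≤ ∑ s', P sk s' * |q s'| := by
              calc M = |q sk| := hIH.symm
                _ = |∑ s', P sk s' * q s'| := by rw [heq]
                _ ≤ ∑ s', |P sk s' * q s'| := Finset.abs_sum_le_sum_abs _ _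
                _ = ∑ s', P sk s' * |q s'| := by
                    refine Finset.sum_congr rfl fun s' _ => ?_
                    rw [abs_mul, abs_of_nonneg (hpos sk s')]
            have h2 : ∑ s', P sk s' * |q s'| ≤ ∑ s', P sk s' * M :=
              Finset.sum_le_sum fun s' _ =>
                mul_le_mul_of_nonneg_left (hmax' s') (hpos sk s')
            have h3 : (∑ s', P sk s' * M) = M := by
              rw [← Finset.sum_mul, hrow, one_mul]
            have hEq : (∑ s', P sk s' * |q s'|) = M :=
              le_antisymm (h2.trans h3.le) h1
            have hall : ∀ s' ∈ Finset.univ, P sk s' * (M - |q s'|) = 0 := by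
              rw [← Finset.sum_eq_zero_iff_of_nonneg
                (fun s' _ => mul_nonneg (hpos sk s') (sub_nonneg.mpr (hmax' s')))]
              simp only [mul_sub, Finset.sum_sub_distrib, hEq, h3, sub_self]
            have hnext := hall (π.2 i.succ) (Finset.mem_univ _)
            have hP := hstep i
            have : M - |q (π.2 i.succ)| = 0 := by
              rcases mul_eq_zero.mp hnext with h | h
              · exact absurd h (ne_of_gt hP)
              · exact h
            have hsucc : i.succ = (⟨k + 1, Nat.lt_succ_of_le hk1⟩ : Fin (π.1 + 1)) := by
              apply Fin.ext; simp [hidef]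
            rw [← hsucc]
            linarith [this]
        have hlastM : |q (π.2 (Fin.last π.1))| = M := by
          have := key π.1 le_rfl
          have hl : (⟨π.1, Nat.lt_succ_of_le le_rfl⟩ : Fin (π.1 + 1)) = Fin.last π.1 := by
            apply Fin.ext; simp
          rwa [hl] at this
        rw [qT _ hπ.2.1, abs_zero] at hlastM
        exact hM hlastM.symm
      intro s
      have := hmax' s
      rw [hM0] at this
      exact abs_eq_zero.mp (le_antisymm this (abs_nonneg _))
  · rintro rfl
    refine ⟨fun s hs => reachProb_one hpos hs, fun s hs => hs, fun s hs => ?_⟩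
    exact reachProb_rec hpos hrow fun hT => hs (Or.inl hT)
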